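/- With the notation of the previous statement, the map f sending a cyclic orientation of the simplicial tree T (all valences finite and ≥ 3) to the induced total cyclic order on ∂∞T is injective: two distinct cyclic orientations of T induce distinct total cyclic orders on ∂∞T. -/
import Mathlib


/-- `r` represents a germ of geodesic ray issued from `x`. -/
def IsRayFrom {X : Type*} [MetricSpace X] (x : X) (r : ℝ → X) : Prop :=
  r 0 = x ∧ ∃ ε > (0 : ℝ), ∀ s ∈ Set.Icc 0 ε, ∀ t ∈ Set.Icc 0 ε,
    dist (r s) (r t) = |s - t|

/-- Two ray representatives issued from `x` define the same germ if they coincide on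
some initial interval. -/
def GermEq {X : Type*} [MetricSpace X] (x : X) (r r' : ℝ → X) : Prop :=
  ∃ ε > (0 : ℝ), ∀ s ∈ Set.Icc 0 ε, r s = r' s

/-- `r : ℝ → X` is a complete geodesic ray (isometric on `[0, +∞)`). -/
def IsGeodesicRay {X : Type*} [MetricSpace X] (r : ℝ → X) : Prop :=
  ∀ s ≥ (0 : ℝ), ∀ t ≥ (0 : ℝ), dist (r s) (r t) = |s - t|

/-- Two geodesic rays are asymptotic (they define the same point at infinity). -/
def Asymptotic {X : Type*} [MetricSpace X] (r r' : ℝ → X) : Prop :=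
  ∃ C : ℝ, ∀ t ≥ (0 : ℝ), dist (r t) (r' t) ≤ C

/-- A simplicial tree (as a metric space): a geodesic `ℝ`-tree with a discrete set of
vertices, every vertex of finite valence `≥ 3`, every non-vertex point of valence `2`,
and in which every germ of ray extends to a geodesic ray. -/
structure SimplicialTreeSpace where
  space : Type
  [ms : MetricSpace space]
  /-- `space` is geodesic. -/
  geodesic : ∀ x y : space, ∃ γ : ℝ → space, γ 0 = x ∧ γ (dist x y) = y ∧
    ∀ s ∈ Set.Icc 0 (dist x y), ∀ t ∈ Set.Icc 0 (dist x y), dist (γ s) (γ t) = |s - t|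
  /-- `space` is `0`-hyperbolic (four-point condition), hence an `ℝ`-tree. -/
  zero_hyperbolic : ∀ x y z w : space,
    dist x z + dist y w ≤ max (dist x y + dist z w) (dist x w + dist y z)
  vertices : Set space
  /-- Edge lengths are bounded below: vertices are uniformly separated. -/
  edge_lengths_bounded_below : ∃ lambda > (0 : ℝ), ∀ x ∈ vertices, ∀ y ∈ vertices,
    x ≠ y → lambda ≤ dist x y
  /-- Non-vertex points have exactly two germs of rays. -/
  two_germs_off_vertices : ∀ x ∉ vertices, ∃ r r' : ℝ → space,
    IsRayFrom x r ∧ IsRayFrom x r' ∧ ¬ GermEq x r r' ∧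
    ∀ r'' : ℝ → space, IsRayFrom x r'' → GermEq x r'' r ∨ GermEq x r'' r'
  /-- Every vertex has finite valence. -/
  germs_finite : ∀ x : space, ∃ Fx : Set (ℝ → space), Fx.Finite ∧
    ∀ r : ℝ → space, IsRayFrom x r → ∃ r' ∈ Fx, GermEq x r r'
  /-- Every vertex has valence at least `3`. -/
  valence_ge_three : ∀ x ∈ vertices, ∃ r₁ r₂ r₃ : ℝ → space,
    IsRayFrom x r₁ ∧ IsRayFrom x r₂ ∧ IsRayFrom x r₃ ∧
    ¬ GermEq x r₁ r₂ ∧ ¬ GermEq x r₂ r₃ ∧ ¬ GermEq x r₁ r₃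
  /-- Every germ of ray extends to a complete geodesic ray. -/
  germ_extends : ∀ (x : space) (r : ℝ → space), IsRayFrom x r →
    ∃ ρ : ℝ → space, IsGeodesicRay ρ ∧ ρ 0 = x ∧ GermEq x ρ r

attribute [instance] SimplicialTreeSpace.ms

/-- The boundary at infinity of the tree: geodesic rays modulo the asymptotic
relation. -/
def SimplicialTreeSpace.Boundary (T : SimplicialTreeSpace) : Type :=
  Quot (fun r r' : {r : ℝ → T.space // IsGeodesicRay r} => Asymptotic r.1 r'.1)

/-- The point at infinity of a geodesic ray. -/
def SimplicialTreeSpace.atInfinity (T : SimplicialTreeSpace)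
    (r : {r : ℝ → T.space // IsGeodesicRay r}) : T.Boundary :=
  Quot.mk _ r

/-- A cyclic orientation of the tree: a total cyclic order, invariant under germ
equivalence, on the germs of rays at each point. -/
structure IsCyclicOrientation (T : SimplicialTreeSpace)
    (ord : T.space → (ℝ → T.space) → (ℝ → T.space) → (ℝ → T.space) → ℤ) : Prop where
  range : ∀ x r₁ r₂ r₃, ord x r₁ r₂ r₃ = -1 ∨ ord x r₁ r₂ r₃ = 0 ∨ ord x r₁ r₂ r₃ = 1
  germ_invariant : ∀ x r₁ r₂ r₃ r₁' r₂' r₃', GermEq x r₁ r₁' → GermEq x r₂ r₂' →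
    GermEq x r₃ r₃' → ord x r₁ r₂ r₃ = ord x r₁' r₂' r₃'
  zero_iff : ∀ x r₁ r₂ r₃, IsRayFrom x r₁ → IsRayFrom x r₂ → IsRayFrom x r₃ →
    (ord x r₁ r₂ r₃ = 0 ↔ GermEq x r₁ r₂ ∨ GermEq x r₂ r₃ ∨ GermEq x r₁ r₃)
  cyclic : ∀ x r₁ r₂ r₃, ord x r₁ r₂ r₃ = ord x r₂ r₃ r₁ ∧
    ord x r₁ r₂ r₃ = - ord x r₁ r₃ r₂
  trans : ∀ x r₁ r₂ r₃ r₄, IsRayFrom x r₁ → IsRayFrom x r₂ → IsRayFrom x r₃ →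
    IsRayFrom x r₄ → ¬ GermEq x r₁ r₂ → ¬ GermEq x r₁ r₃ → ¬ GermEq x r₁ r₄ →
    ¬ GermEq x r₂ r₃ → ¬ GermEq x r₂ r₄ → ¬ GermEq x r₃ r₄ →
    ord x r₁ r₂ r₃ = 1 → ord x r₁ r₃ r₄ = 1 → ord x r₁ r₂ r₄ = 1

/-- `o` is the cyclic order on the boundary at infinity induced by the cyclic
orientation `ord` of the tree: `o(a,b,c) = 0` if `a, b, c` are not pairwise distinct,
and otherwise `o(a,b,c) = ord_t(r_a, r_b, r_c)` where `t` is the center of the tripod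
determined by `a, b, c` — characterized as the unique point from which rays `r_a, r_b,
r_c` towards `a, b, c` have pairwise distinct germs. -/
structure IsInducedBoundaryOrder (T : SimplicialTreeSpace)
    (ord : T.space → (ℝ → T.space) → (ℝ → T.space) → (ℝ → T.space) → ℤ)
    (o : T.Boundary → T.Boundary → T.Boundary → ℤ) : Prop where
  eq_ord : ∀ (t : T.space) (ra rb rc : {r : ℝ → T.space // IsGeodesicRay r}),
    ra.1 0 = t → rb.1 0 = t → rc.1 0 = t →
    ¬ GermEq t ra.1 rb.1 → ¬ GermEq t rb.1 rc.1 → ¬ GermEq t ra.1 rc.1 →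
    o (T.atInfinity ra) (T.atInfinity rb) (T.atInfinity rc) = ord t ra.1 rb.1 rc.1
  zero_of_not_distinct : ∀ a b c : T.Boundary, (a = b ∨ b = c ∨ a = c) → o a b c = 0

/-- A total cyclic order (with values in `{-1,0,1} ⊆ ℤ`). -/
def IsTotalCyclicOrder {X : Type*} (o : X → X → X → ℤ) : Prop :=
  (∀ x y z : X, o x y z = -1 ∨ o x y z = 0 ∨ o x y z = 1) ∧
  (∀ x y z : X, o x y z = 0 ↔ ¬(x ≠ y ∧ y ≠ z ∧ x ≠ z)) ∧
  (∀ x y z : X, o x y z = o y z x ∧ o x y z = - o x z y) ∧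
  (∀ x y z t : X, x ≠ y → x ≠ z → x ≠ t → y ≠ z → y ≠ t → z ≠ t →
    o x y z = 1 → o x z t = 1 → o x y t = 1)

lemma germEq_symm {X : Type*} [MetricSpace X] {x : X} {r r' : ℝ → X}
    (h : GermEq x r r') : GermEq x r' r := by
  obtain ⟨ε, hε, h⟩ := h
  exact ⟨ε, hε, fun s hs => (h s hs).symm⟩

lemma germEq_trans {X : Type*} [MetricSpace X] {x : X} {r r' r'' : ℝ → X}
    (h : GermEq x r r') (h' : GermEq x r' r'') : GermEq x r r'' := by
  obtain ⟨ε, hε, h⟩ := h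
  obtain ⟨ε', hε', h'⟩ := h'
  refine ⟨min ε ε', lt_min hε hε', fun s hs => ?_⟩
  obtain ⟨hs0, hs1⟩ := hs
  rw [h s ⟨hs0, hs1.trans (min_le_left _ _)⟩, h' s ⟨hs0, hs1.trans (min_le_right _ _)⟩]

/-- the map sending a cyclic orientation of the simplicial tree `T`
(all valences finite and `≥ 3`) to the induced total cyclic order on `∂∞T` is
injective: if two cyclic orientations induce the same order on the boundary, they
agree (on germs of rays at every point). -/
theorem induced_boundary_order_injective
    (T : SimplicialTreeSpace)
    (ord₁ ord₂ : T.space → (ℝ → T.space) → (ℝ → T.space) → (ℝ → T.space) → ℤ)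
    (h₁ : IsCyclicOrientation T ord₁) (h₂ : IsCyclicOrientation T ord₂)
    (o : T.Boundary → T.Boundary → T.Boundary → ℤ)
    (ho₁ : IsInducedBoundaryOrder T ord₁ o)
    (ho₂ : IsInducedBoundaryOrder T ord₂ o) :
    ∀ (x : T.space) (r₁ r₂ r₃ : ℝ → T.space), IsRayFrom x r₁ → IsRayFrom x r₂ →
      IsRayFrom x r₃ → ord₁ x r₁ r₂ r₃ = ord₂ x r₁ r₂ r₃ := by
  intro x r₁ r₂ r₃ hr₁ hr₂ hr₃
  -- extend each germ to a complete geodesic ray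
  obtain ⟨ρ₁, hρ₁, hρ₁0, hg₁⟩ := T.germ_extends x r₁ hr₁
  obtain ⟨ρ₂, hρ₂, hρ₂0, hg₂⟩ := T.germ_extends x r₂ hr₂
  obtain ⟨ρ₃, hρ₃, hρ₃0, hg₃⟩ := T.germ_extends x r₃ hr₃
  have e₁ : ord₁ x r₁ r₂ r₃ = ord₁ x ρ₁ ρ₂ ρ₃ :=
    h₁.germ_invariant x _ _ _ _ _ _ (germEq_symm hg₁) (germEq_symm hg₂) (germEq_symm hg₃)
  have e₂ : ord₂ x r₁ r₂ r₃ = ord₂ x ρ₁ ρ₂ ρ₃ :=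
    h₂.germ_invariant x _ _ _ _ _ _ (germEq_symm hg₁) (germEq_symm hg₂) (germEq_symm hg₃)
  by_cases hdeg : GermEq x r₁ r₂ ∨ GermEq x r₂ r₃ ∨ GermEq x r₁ r₃
  · rw [(h₁.zero_iff x r₁ r₂ r₃ hr₁ hr₂ hr₃).2 hdeg,
      (h₂.zero_iff x r₁ r₂ r₃ hr₁ hr₂ hr₃).2 hdeg]
  · push_neg at hdeg
    obtain ⟨h12, h23, h13⟩ := hdeg
    have g12 : ¬ GermEq x ρ₁ ρ₂ := fun h => h12 (germEq_trans (germEq_trans (germEq_symm hg₁) h) hg₂)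
    have g23 : ¬ GermEq x ρ₂ ρ₃ := fun h => h23 (germEq_trans (germEq_trans (germEq_symm hg₂) h) hg₃)
    have g13 : ¬ GermEq x ρ₁ ρ₃ := fun h => h13 (germEq_trans (germEq_trans (germEq_symm hg₁) h) hg₃)
    have b₁ := ho₁.eq_ord x ⟨ρ₁, hρ₁⟩ ⟨ρ₂, hρ₂⟩ ⟨ρ₃, hρ₃⟩ hρ₁0 hρ₂0 hρ₃0 g12 g23 g13
    have b₂ := ho₂.eq_ord x ⟨ρ₁, hρ₁⟩ ⟨ρ₂, hρ₂⟩ ⟨ρ₃, hρ₃⟩ hρ₁0 hρ₂0 hρ₃0 g12 g23 g13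
    rw [e₁, e₂, ← b₁, ← b₂]
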